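/- For all positive integers m and n, the sum over divisors a of m and b of n of φ(gcd(a,b)) equals the sum over divisors u of gcd(m,n) of (φ*μ)(u)·τ(m/u)·τ(n/u), where * denotes Dirichlet convolution and μ the Möbius function. -/

import Mathlib

open Finset ArithmeticFunction
open scoped ArithmeticFunction.Moebius ArithmeticFunction.zeta

noncomputable def totientZ : ArithmeticFunction ℤ :=
  ⟨fun n => (Nat.totient n : ℤ), by simp⟩

lemma totient_eq_sum_fmu (k : ℕ) (hk : k ≠ 0) :
    (Nat.totient k : ℤ) = ∑ u ∈ k.divisors,
      ∑ d ∈ u.divisors, (Nat.totient d : ℤ) * ArithmeticFunction.moebius (u / d) := by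
  have h : totientZ = totientZ * μ * ζ := by
    rw [mul_assoc, moebius_mul_coe_zeta, mul_one]
  have h2 := congrArg (fun f : ArithmeticFunction ℤ => f k) h
  simp only [coe_mul_zeta_apply] at h2
  rw [show (Nat.totient k : ℤ) = totientZ k from rfl, h2]
  refine Finset.sum_congr rfl fun u hu => ?_
  rw [ArithmeticFunction.mul_apply]
  exact Nat.sum_divisorsAntidiagonal fun x y => totientZ x * μ y

lemma card_filter_dvd (u m : ℕ) (hm : m ≠ 0) (hu : u ∣ m) :
    ({a ∈ m.divisors | u ∣ a} : Finset ℕ).card = (m / u).divisors.card := by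
  have hu0 : u ≠ 0 := fun h => hm (by simpa [h] using hu)
  have hmu : m / u ≠ 0 :=
    (Nat.div_pos (Nat.le_of_dvd (Nat.pos_of_ne_zero hm) hu) (Nat.pos_of_ne_zero hu0)).ne'
  apply Finset.card_bij' (fun a _ => a / u) (fun d _ => u * d)
  · intro a ha
    simp only [mem_filter, Nat.mem_divisors] at ha
    obtain ⟨⟨⟨c, rfl⟩, -⟩, hua⟩ := ha
    rw [Nat.mem_divisors]
    refine ⟨⟨c, ?_⟩, hmu⟩
    rw [mul_comm a c, Nat.mul_div_assoc c hua, mul_comm]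
  · intro d hd
    simp only [Nat.mem_divisors] at hd
    simp only [mem_filter, Nat.mem_divisors]
    exact ⟨⟨Nat.mul_dvd_of_dvd_div hu hd.1, hm⟩, Dvd.intro d rfl⟩
  · intro a ha
    simp only [mem_filter] at ha
    exact Nat.mul_div_cancel' ha.2
  · intro d hd
    exact Nat.mul_div_cancel_left d (Nat.pos_of_ne_zero hu0)

theorem totient_gcd_divisor_sum_eq (m n : ℕ) (hm : 0 < m) (hn : 0 < n) :
    (∑ a ∈ m.divisors, ∑ b ∈ n.divisors, (Nat.totient (Nat.gcd a b) : ℤ)) =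
      ∑ u ∈ (Nat.gcd m n).divisors,
        (∑ d ∈ u.divisors, (Nat.totient d : ℤ) * ArithmeticFunction.moebius (u / d)) *
          (m / u).divisors.card * (n / u).divisors.card := by
  set f : ℕ → ℤ := fun u => ∑ d ∈ u.divisors, (Nat.totient d : ℤ) * μ (u / d) with hf
  have hgcd : Nat.gcd m n ≠ 0 := Nat.gcd_ne_zero_left hm.ne'
  calc (∑ a ∈ m.divisors, ∑ b ∈ n.divisors, (Nat.totient (Nat.gcd a b) : ℤ))
      = ∑ a ∈ m.divisors, ∑ b ∈ n.divisors, ∑ u ∈ (Nat.gcd m n).divisors,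
          if u ∣ a ∧ u ∣ b then f u else 0 := by
        refine Finset.sum_congr rfl fun a ha => Finset.sum_congr rfl fun b hb => ?_
        have ha' := Nat.mem_divisors.mp ha
        have hb' := Nat.mem_divisors.mp hb
        have hab : Nat.gcd a b ≠ 0 :=
          Nat.gcd_ne_zero_left (Nat.pos_of_mem_divisors ha).ne'
        rw [totient_eq_sum_fmu _ hab, ← Finset.sum_filter]
        refine Finset.sum_congr ?_ fun _ _ => rfl
        ext u
        simp only [mem_filter, Nat.mem_divisors, Nat.dvd_gcd_iff]
        constructor
        · rintro ⟨⟨hua, hub⟩, -⟩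
          exact ⟨⟨⟨hua.trans ha'.1, hub.trans hb'.1⟩, hgcd⟩, hua, hub⟩
        · rintro ⟨-, hua, hub⟩
          exact ⟨⟨hua, hub⟩, hab⟩
    _ = ∑ a ∈ m.divisors, ∑ u ∈ (Nat.gcd m n).divisors, ∑ b ∈ n.divisors,
          if u ∣ a ∧ u ∣ b then f u else 0 :=
        Finset.sum_congr rfl fun a _ => Finset.sum_comm
    _ = ∑ u ∈ (Nat.gcd m n).divisors, ∑ a ∈ m.divisors, ∑ b ∈ n.divisors,
          if u ∣ a ∧ u ∣ b then f u else 0 := Finset.sum_comm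
    _ = ∑ u ∈ (Nat.gcd m n).divisors,
          f u * (m / u).divisors.card * (n / u).divisors.card := by
        refine Finset.sum_congr rfl fun u hu => ?_
        have hu' := Nat.mem_divisors.mp hu
        have hum : u ∣ m := hu'.1.trans (Nat.gcd_dvd_left m n)
        have hun : u ∣ n := hu'.1.trans (Nat.gcd_dvd_right m n)
        have key : ∀ a ∈ m.divisors, (∑ b ∈ n.divisors, if u ∣ a ∧ u ∣ b then f u else 0)
            = if u ∣ a then f u * (n / u).divisors.card else 0 := by
          intro a _
          by_cases hua : u ∣ a
          · simp only [hua, true_and, if_pos]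
            rw [← Finset.sum_filter, Finset.sum_const,
              card_filter_dvd u n hn.ne' hun, nsmul_eq_mul, mul_comm]
          · simp [hua]
        rw [Finset.sum_congr rfl key, ← Finset.sum_filter, Finset.sum_const,
          card_filter_dvd u m hm.ne' hum, nsmul_eq_mul]
        ring
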